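/- The basic left-corner transformation eliminates left recursion: if G is a context-free grammar with no unary and no nullary rules, then trim(GLCT(G, R, N ∪ Σ)) (taking all rules as left-corner recognition rules and all symbols as left-corner recognition symbols) is not left-recursive. -/

import Mathlib

/-- Symbols of a grammar: nonterminals `N` or terminals `T`. -/
abbrev GSym (N T : Type) := N ⊕ T

/-- A weighted production rule `X →w α`. -/
abbrev GRule (N T W : Type) := N × List (GSym N T) × W

/-- A weighted context-free grammar (rules form a bag/set of weighted rules). -/
structure WCFG (N T W : Type) where
  start : N
  rules : Set (GRule N T W)

/-- Derivation trees (with a possible `gap` leaf, used to represent a removed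
left corner; well-formed derivations contain no gaps). -/
inductive DTree (N T W : Type) where
  | leaf : T → DTree N T W
  | gap  : DTree N T W
  | node : N → W → List (DTree N T W) → DTree N T W

namespace DTree

variable {N T W : Type}

def label : DTree N T W → Option (GSym N T)
  | leaf a => some (Sum.inr a)
  | gap => none
  | node X _ _ => some (Sum.inl X)

def yield : DTree N T W → List T
  | leaf a => [a]
  | gap => []
  | node _ _ ts => (ts.attach.map fun t => t.1.yield).flatten
decreasing_by simp only [DTree.node.sizeOf_spec]; have := List.sizeOf_lt_of_mem t.2; omega

def weight [Semiring W] : DTree N T W → W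
  | leaf _ => 1
  | gap => 1
  | node _ w ts => w * (ts.attach.map fun t => t.1.weight).prod
decreasing_by simp only [DTree.node.sizeOf_spec]; have := List.sizeOf_lt_of_mem t.2; omega

/-- The list of weights of the rules applied at internal nodes. -/
def ruleWeights : DTree N T W → List W
  | leaf _ => []
  | gap => []
  | node _ w ts => w :: (ts.attach.map fun t => t.1.ruleWeights).flatten
decreasing_by simp only [DTree.node.sizeOf_spec]; have := List.sizeOf_lt_of_mem t.2; omega

/-- Left-recursion depth: length of the path from the root to the leftmost leaf. -/
def lrDepth : DTree N T W → ℕ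
  | leaf _ => 0
  | gap => 0
  | node _ _ [] => 0
  | node _ _ (t1 :: _) => t1.lrDepth + 1

/-- `Sub s t` : `s` is a subtree of `t`. -/
inductive Sub : DTree N T W → DTree N T W → Prop
  | refl (t : DTree N T W) : Sub t t
  | child {s t : DTree N T W} {X w ts} : t ∈ ts → Sub s t → Sub s (node X w ts)

end DTree

variable {N T W : Type}

/-- The children list `ts` together with head `X` and weight `w` matches a rule in `R`. -/
def RuleApp (R : Set (GRule N T W)) (X : N) (ts : List (DTree N T W)) (w : W) : Prop :=
  ∃ rhs, (X, rhs, w) ∈ R ∧ ts.map DTree.label = rhs.map some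

/-- Well-formed derivations of a grammar. -/
inductive DTree.WF (G : WCFG N T W) : DTree N T W → Prop
  | leaf (a : T) : DTree.WF G (DTree.leaf a)
  | node {X : N} {w : W} {ts : List (DTree N T W)} :
      RuleApp G.rules X ts w → (∀ t ∈ ts, DTree.WF G t) →
      DTree.WF G (DTree.node X w ts)

/-- The weighted language of a symbol `α`: the sum of the weights of all
well-formed derivations rooted at `α` whose yield is `x`. -/
noncomputable def WCFG.lang [Semiring W] (G : WCFG N T W) (α : GSym N T) (x : List T) : W :=
  ∑ᶠ t : {t : DTree N T W // t.WF G ∧ t.label = some α ∧ t.yield = x}, (t : DTree N T W).weight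

/-- `α` occurs as the label of some subderivation of some derivation rooted at the start symbol. -/
def WCFG.Useful (G : WCFG N T W) (α : GSym N T) : Prop :=
  ∃ t s : DTree N T W, t.WF G ∧ t.label = some (Sum.inl G.start) ∧ s.Sub t ∧ s.label = some α

/-- Trimming: keep only the rules all of whose symbols are useful. -/
def WCFG.trim (G : WCFG N T W) : WCFG N T W where
  start := G.start
  rules := {r | r ∈ G.rules ∧ ∀ s ∈ (Sum.inl r.1 :: r.2.1), G.Useful s}

/-- A rule participates in some derivation rooted at the start symbol. -/
def WCFG.RuleUseful (G : WCFG N T W) (r : GRule N T W) : Prop :=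
  ∃ t s : DTree N T W, t.WF G ∧ t.label = some (Sum.inl G.start) ∧ s.Sub t ∧
    ∃ ts, s = DTree.node r.1 r.2.2 ts ∧ ts.map DTree.label = r.2.1.map some

/-- Union of weighted languages. -/
def wunion [Semiring W] (L L' : List T → W) : List T → W := fun x => L x + L' x

/-- Concatenation of weighted languages: sum over the two-part factorizations. -/
def wconc [Semiring W] (L L' : List T → W) : List T → W := fun x =>
  ((List.range (x.length + 1)).map (fun i => L (x.take i) * L' (x.drop i))).sum

/-- The zero weighted language. -/
def wzero [Semiring W] : List T → W := fun _ => 0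

open Classical in
/-- The unit weighted language: `1` on the empty string, `0` elsewhere. -/
noncomputable def wone [Semiring W] : List T → W := fun x => if x = [] then 1 else 0

/-- Nonterminals of the output of the (generalized) left-corner / speculation
transformations: originals `X`, frozen `X̃`, and slashed `α/β`. -/
inductive LCNT (N T : Type) where
  | orig : N → LCNT N T
  | frozen : N → LCNT N T
  | slash : GSym N T → GSym N T → LCNT N T

/-- Embedding of original symbols into the transformed grammar's symbols. -/
def emb : GSym N T → GSym (LCNT N T) T := Sum.map LCNT.orig id

/-- The frozen version `α̃` of a symbol (terminals are left unchanged). -/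
def frz : GSym N T → GSym (LCNT N T) T
  | Sum.inl X => Sum.inl (LCNT.frozen X)
  | Sum.inr a => Sum.inr a

/-- The generalized left-corner transformation GLCT(G, P, C). -/
def GLCT (G : WCFG N T W) [One W] (P : Set (GRule N T W)) (C : Set (GSym N T)) :
    WCFG (LCNT N T) T W where
  start := LCNT.orig G.start
  rules :=
    {r | ∃ X : N, (Sum.inl X : GSym N T) ∉ C ∧
          r = (LCNT.orig X, [Sum.inl (LCNT.frozen X)], (1 : W))} ∪
    {r | ∃ (X : N) (α : GSym N T), α ∈ C ∧
          r = (LCNT.orig X, [frz α, Sum.inl (LCNT.slash (Sum.inl X) α)], (1 : W))} ∪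
    {r | ∃ α : GSym N T, r = (LCNT.slash α α, [], (1 : W))} ∪
    {r | ∃ (X : N) (α : GSym N T) (β : List (GSym N T)) (w : W) (Y : N),
          (X, α :: β, w) ∈ P ∧
          r = (LCNT.slash (Sum.inl Y) α,
               β.map emb ++ [Sum.inl (LCNT.slash (Sum.inl Y) (Sum.inl X))], w)} ∪
    {r | ∃ (X : N) (rhs : List (GSym N T)) (w : W),
          (X, rhs, w) ∈ G.rules ∧ (X, rhs, w) ∉ P ∧ r = (LCNT.frozen X, rhs.map emb, w)} ∪
    {r | ∃ (X : N) (α : GSym N T) (β : List (GSym N T)) (w : W),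
          (X, α :: β, w) ∈ P ∧ α ∉ C ∧ r = (LCNT.frozen X, frz α :: β.map emb, w)}

/-- The speculation transformation SPEC(G, P, C). -/
def SPEC (G : WCFG N T W) [One W] (P : Set (GRule N T W)) (C : Set (GSym N T)) :
    WCFG (LCNT N T) T W where
  start := LCNT.orig G.start
  rules :=
    {r | ∃ X : N, (Sum.inl X : GSym N T) ∉ C ∧
          r = (LCNT.orig X, [Sum.inl (LCNT.frozen X)], (1 : W))} ∪
    {r | ∃ (X : N) (α : GSym N T), α ∈ C ∧
          r = (LCNT.orig X, [frz α, Sum.inl (LCNT.slash (Sum.inl X) α)], (1 : W))} ∪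
    {r | ∃ α : GSym N T, r = (LCNT.slash α α, [], (1 : W))} ∪
    {r | ∃ (X : N) (α : GSym N T) (β : List (GSym N T)) (w : W) (Y : GSym N T),
          (X, α :: β, w) ∈ P ∧
          r = (LCNT.slash (Sum.inl X) Y,
               Sum.inl (LCNT.slash α Y) :: β.map emb, w)} ∪
    {r | ∃ (X : N) (rhs : List (GSym N T)) (w : W),
          (X, rhs, w) ∈ G.rules ∧ (X, rhs, w) ∉ P ∧ r = (LCNT.frozen X, rhs.map emb, w)} ∪
    {r | ∃ (X : N) (α : GSym N T) (β : List (GSym N T)) (w : W),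
          (X, α :: β, w) ∈ P ∧ α ∉ C ∧ r = (LCNT.frozen X, frz α :: β.map emb, w)}

/-- Edge relation of the left-recursion graph restricted to a rule set `R`:
an edge from `X` to the leftmost right-hand-side symbol of a rule in `R`. -/
def EdgeRel (R : Set (GRule N T W)) (a b : GSym N T) : Prop :=
  ∃ (X : N) (rhs : List (GSym N T)) (w : W),
    a = Sum.inl X ∧ (X, rhs, w) ∈ R ∧ rhs.head? = some b

/-- A rule is left-recursive if its edge lies on a cycle of the left-recursion graph. -/
def LeftRecRule (G : WCFG N T W) (r : GRule N T W) : Prop :=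
  ∃ b, r.2.1.head? = some b ∧ Relation.ReflTransGen (EdgeRel G.rules) b (Sum.inl r.1)

/-- `bottoms(P)`: the symbols that may appear at the bottom of a spine. -/
def bottoms (G : WCFG N T W) (P : Set (GRule N T W)) : Set (GSym N T) :=
  {α | ((∃ a : T, α = Sum.inr a) ∨
        ∃ (X : N) (rhs : List (GSym N T)) (w : W),
          α = Sum.inl X ∧ (X, rhs, w) ∈ G.rules ∧ (X, rhs, w) ∉ P ∧ rhs ≠ []) ∧
       (∃ (X : N) (rhs : List (GSym N T)) (w : W), (X, rhs, w) ∈ P ∧ rhs.head? = some α)}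


/-- Rank of a symbol label: bound on the left-recursion depth of a well-formed
tree with that label in the basic LCT grammar. -/
def LCrank : Option (GSym (LCNT N T) T) → ℕ
  | some (Sum.inl (LCNT.orig _)) => 1
  | some (Sum.inl (LCNT.slash _ (Sum.inl _))) => 2
  | some (Sum.inl (LCNT.slash _ (Sum.inr _))) => 3
  | _ => 0

lemma LCrank_le_three (o : Option (GSym (LCNT N T) T)) : LCrank o ≤ 3 := by
  rcases o with _ | (⟨X | X | ⟨α, β | b⟩⟩ | a) <;> simp [LCrank]

lemma WF_mono {G G' : WCFG N T W} (hs : G.rules ⊆ G'.rules) :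
    ∀ t : DTree N T W, t.WF G → t.WF G' := by
  intro t h
  induction h with
  | leaf a => exact DTree.WF.leaf a
  | node happ hwf ih =>
      obtain ⟨rhs, hr, hl⟩ := happ
      exact DTree.WF.node ⟨rhs, hs hr, hl⟩ ih

lemma frozen_no_rule (G : WCFG N T W) [One W] (X : N) (ts : List (DTree (LCNT N T) T W))
    (w : W) : ¬ RuleApp (GLCT G G.rules Set.univ).rules (LCNT.frozen X) ts w := by
  rintro ⟨rhs, hr, -⟩
  simp only [GLCT, Set.mem_union, Set.mem_setOf_eq] at hr
  rcases hr with ((((⟨Y, hY, he⟩ | ⟨Y, α, -, he⟩) | ⟨α, he⟩) | ⟨Y, α, β, w', Z, -, he⟩) |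
      ⟨Y, rhs', w', hmem, hnmem, -⟩) | ⟨Y, α, β, w', -, hC, -⟩
  · exact hY (Set.mem_univ _)
  · cases he
  · cases he
  · cases he
  · exact hnmem hmem
  · exact hC (Set.mem_univ _)

lemma frz_lrDepth_zero (G : WCFG N T W) [One W] (t : DTree (LCNT N T) T W)
    (hwf : t.WF (GLCT G G.rules Set.univ)) (α : GSym N T)
    (hl : t.label = some (frz α)) : t.lrDepth = 0 := by
  cases t with
  | leaf a => rfl
  | gap => rfl
  | node Y w ts =>
      cases hwf with
      | node happ _ =>
          exfalso
          cases α with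
          | inl Z =>
              simp only [DTree.label, frz, Option.some.injEq, Sum.inl.injEq] at hl
              exact frozen_no_rule G Z ts w (hl ▸ happ)
          | inr a => simp [DTree.label, frz] at hl

lemma lrDepth_le_rank (G : WCFG N T W) [One W]
    (hshape : ∀ r ∈ G.rules, 2 ≤ r.2.1.length ∨
        (r.2.1 ≠ [] ∧ ∀ s ∈ r.2.1, ∃ a : T, s = Sum.inr a)) :
    ∀ t : DTree (LCNT N T) T W, t.WF (GLCT G G.rules Set.univ) →
      t.lrDepth ≤ LCrank t.label := by
  intro t h
  induction h with
  | leaf a => simp [DTree.lrDepth]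
  | @node X w ts happ hwf ih =>
      obtain ⟨rhs, hr, hl⟩ := happ
      simp only [GLCT, Set.mem_union, Set.mem_setOf_eq] at hr
      rcases hr with ((((⟨Y, hY, he⟩ | ⟨Y, α, -, he⟩) | ⟨α, he⟩) | ⟨Y, α, β, w', Z, hmem, he⟩) |
          ⟨Y, rhs', w', hmem, hnmem, -⟩) | ⟨Y, α, β, w', -, hC, -⟩
      · exact absurd (Set.mem_univ _) hY
      · -- rule 2: orig Y → [frz α, slash Y α]
        simp only [Prod.mk.injEq] at he
        obtain ⟨hX, hrhs, -⟩ := he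
        subst hX hrhs
        cases ts with
        | nil => simp at hl
        | cons t1 ts2 =>
            simp only [List.map_cons, List.map_nil, List.cons.injEq] at hl
            have h0 := frz_lrDepth_zero G t1 (hwf t1 (by simp)) α hl.1
            simp [DTree.lrDepth, h0, DTree.label, LCrank]
      · -- rule 3: slash α α → []
        simp only [Prod.mk.injEq] at he
        obtain ⟨hX, hrhs, -⟩ := he
        subst hrhs
        cases ts with
        | nil => simp [DTree.lrDepth]
        | cons t1 ts2 => simp at hl
      · -- rule 4
        simp only [Prod.mk.injEq] at he
        obtain ⟨hX, hrhs, -⟩ := he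
        subst hX hrhs
        cases β with
        | nil =>
            cases α with
            | inl U =>
                exfalso
                rcases hshape _ hmem with h2 | ⟨-, hterm⟩
                · simp at h2
                · obtain ⟨a, ha⟩ := hterm (Sum.inl U) (by simp)
                  cases ha
            | inr a =>
                cases ts with
                | nil => simp at hl
                | cons t1 ts2 =>
                    simp only [List.map_nil, List.nil_append, List.map_cons,
                      List.cons.injEq] at hl
                    have h1 := ih t1 (by simp)
                    rw [hl.1] at h1
                    simp only [LCrank] at h1
                    simp only [DTree.lrDepth, DTree.label, LCrank]
                    omega
        | cons γ β' =>
            cases ts with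
            | nil => simp at hl
            | cons t1 ts' =>
                simp only [List.map_cons, List.cons_append, List.cons.injEq] at hl
                have h1 := ih t1 (by simp)
                rw [hl.1] at h1
                have h1' : t1.lrDepth ≤ 1 :=
                  le_trans h1 (by rcases γ with U | a <;> simp [emb, LCrank])
                cases α <;> · simp only [DTree.lrDepth, DTree.label, LCrank]; omega
      · exact absurd hmem hnmem
      · exact absurd (Set.mem_univ _) hC

/-- The basic left-corner transformation (P = R, C = N ∪ Σ) eliminates left
recursion from a grammar with no unary nonterminal rules and no nullary rules. -/
theorem basic_LCT_eliminates_left_recursion [CommSemiring W] [Fintype N] [Fintype T]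
    (G : WCFG N T W)
    (hshape : ∀ r ∈ G.rules, 2 ≤ r.2.1.length ∨
        (r.2.1 ≠ [] ∧ ∀ s ∈ r.2.1, ∃ a : T, s = Sum.inr a)) :
    ∃ B : ℕ, ∀ t : DTree (LCNT N T) T W,
      t.WF (GLCT G G.rules Set.univ).trim → t.lrDepth ≤ B := by
  refine ⟨3, fun t ht => ?_⟩
  have hwf := WF_mono (G := (GLCT G G.rules Set.univ).trim)
    (G' := GLCT G G.rules Set.univ) (fun r hr => hr.1) t ht
  exact (lrDepth_le_rank G hshape t hwf).trans (LCrank_le_three _)
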